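/- Let G be a group (with counting measure) acting on a set X, and let f : X → ℝ≥0 be a function such that Σ_{g∈G} f(g⁻¹x) = 1 for every x ∈ X (the sum converging, e.g. f of finite support along each orbit). Define e : X × G → ℝ by e(x, g) = √(f(x) f(g⁻¹x)). Then e is idempotent for the convolution product (a ⋆ b)(x, g) = Σ_{h∈G} a(x, h) b(h⁻¹x, h⁻¹g); that is, (e ⋆ e)(x, g) = e(x, g) for all x ∈ X, g ∈ G. -/
import Mathlib


/-- Given a Bruhat function `f` (nonnegative with `Σ_g f(g⁻¹x) = 1` for each
`x`), the kernel `e(x,g) = √(f(x)·f(g⁻¹x))` is idempotent for the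
crossed-product convolution `(a⋆b)(x,g) = Σ_h a(x,h)·b(h⁻¹x, h⁻¹g)`. -/
theorem stmt_12 {G X : Type*} [Group G] [MulAction G X] (f : X → ℝ)
    (hf : ∀ x, 0 ≤ f x)
    (hsum : ∀ x : X, Summable fun g : G => f (g⁻¹ • x))
    (hone : ∀ x : X, ∑' g : G, f (g⁻¹ • x) = 1)
    (x : X) (g : G) :
    ∑' h : G, Real.sqrt (f x * f (h⁻¹ • x)) *
        Real.sqrt (f (h⁻¹ • x) * f ((h⁻¹ * g)⁻¹ • (h⁻¹ • x)))
      = Real.sqrt (f x * f (g⁻¹ • x)) := by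
  have key : ∀ h : G,
      Real.sqrt (f x * f (h⁻¹ • x)) *
        Real.sqrt (f (h⁻¹ • x) * f ((h⁻¹ * g)⁻¹ • (h⁻¹ • x)))
      = Real.sqrt (f x * f (g⁻¹ • x)) * f (h⁻¹ • x) := by
    intro h
    have hx : (h⁻¹ * g)⁻¹ • (h⁻¹ • x) = g⁻¹ • x := by
      rw [smul_smul]; congr 1; group
    rw [hx]
    set a := f x
    set b := f (h⁻¹ • x)
    set c := f (g⁻¹ • x)
    have ha := hf x
    have hb := hf (h⁻¹ • x)
    have hc := hf (g⁻¹ • x)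
    rw [← Real.sqrt_mul (by positivity)]
    rw [show a * b * (b * c) = b ^ 2 * (a * c) by ring]
    rw [Real.sqrt_mul (by positivity), Real.sqrt_sq hb]
    ring
  calc ∑' h : G, Real.sqrt (f x * f (h⁻¹ • x)) *
        Real.sqrt (f (h⁻¹ • x) * f ((h⁻¹ * g)⁻¹ • (h⁻¹ • x)))
      = ∑' h : G, Real.sqrt (f x * f (g⁻¹ • x)) * f (h⁻¹ • x) :=
        tsum_congr key
    _ = Real.sqrt (f x * f (g⁻¹ • x)) * ∑' h : G, f (h⁻¹ • x) := tsum_mul_left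
    _ = Real.sqrt (f x * f (g⁻¹ • x)) := by rw [hone x, mul_one]
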